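/- Let L be the Laplacian of a connected graph G on n vertices and L̂ real symmetric with zero row and column sums. Then the Moore-Penrose inverse of the dual matrix L_w = L + L̂ ε is L_w† = L† - L† L̂ L† ε. -/

import Mathlib

open Matrix

/-- The dual matrix `A_s + A_d ε` built from its standard and infinitesimal parts. -/
def dm {m n : Type*} (A B : Matrix m n ℝ) : Matrix m n (DualNumber ℝ) :=
  Matrix.of fun i j => TrivSqZeroExt.inl (A i j) + TrivSqZeroExt.inr (B i j)

lemma dm_mul {m n p : Type*} [Fintype n] (A B : Matrix m n ℝ) (C D : Matrix n p ℝ) :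
    dm A B * dm C D = dm (A * C) (A * D + B * C) := by
  ext i j
  · simp [dm, Matrix.mul_apply, TrivSqZeroExt.fst_sum, TrivSqZeroExt.fst_mul]
  · simp [dm, Matrix.mul_apply, TrivSqZeroExt.snd_sum, TrivSqZeroExt.snd_mul,
      Finset.sum_add_distrib, mul_comm]

lemma dm_congr {m n : Type*} {A B C D : Matrix m n ℝ} (h₁ : A = C) (h₂ : B = D) :
    dm A B = dm C D := by rw [h₁, h₂]

lemma dm_transpose {m n : Type*} (A B : Matrix m n ℝ) : (dm A B)ᵀ = dm Aᵀ Bᵀ := rfl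

/-- If `L * M = 0` and `M` is symmetric, then `M` is a constant matrix (connected graph),
hence `M * Lhat = 0` when `Lhat` has zero column sums. -/
lemma aux_const {n : ℕ} (hn : 0 < n) (G : SimpleGraph (Fin n)) [DecidableRel G.Adj]
    (hG : G.Connected) (Lhat M : Matrix (Fin n) (Fin n) ℝ)
    (hcol : (fun _ => (1 : ℝ)) ᵥ* Lhat = 0)
    (hLM : G.lapMatrix ℝ * M = 0) (hMs : Mᵀ = M) : M * Lhat = 0 := by
  have z : Fin n := ⟨0, hn⟩
  have hcolc : ∀ j i i', M i j = M i' j := by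
    intro j i i'
    have h0 : Matrix.toLin' (G.lapMatrix ℝ) (fun i => M i j) = 0 := by
      rw [Matrix.toLin'_apply]
      funext i
      have := congrFun (congrFun hLM i) j
      simpa [Matrix.mulVec, Matrix.mul_apply, dotProduct] using this
    exact (G.lapMatrix_mulVec_eq_zero_iff_forall_reachable).mp
        (by rwa [Matrix.toLin'_apply] at h0) i i'
      (hG.preconnected i i')
  have hconst : ∀ i j, M i j = M z z := by
    intro i j
    calc M i j = M z j := hcolc j i z
    _ = Mᵀ j z := rfl
    _ = M j z := by rw [hMs]
    _ = M z z := hcolc z j z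
  ext i j
  have hc := congrFun hcol j
  simp only [Matrix.vecMul, dotProduct, one_mul, Pi.zero_apply] at hc
  simp only [Matrix.mul_apply, Matrix.zero_apply]
  calc ∑ k, M i k * Lhat k j = ∑ k, M z z * Lhat k j := by
        refine Finset.sum_congr rfl fun k _ => by rw [hconst i k]
    _ = M z z * ∑ k, Lhat k j := by rw [Finset.mul_sum]
    _ = 0 := by rw [hc, mul_zero]

/-- For the Laplacian `L` of a connected graph with real Moore-Penrose inverse `L†`
and a symmetric perturbation `L̂` with zero row and column sums, the dual matrix
`L† - L† L̂ L† ε` is the Moore-Penrose inverse of `L_w = L + L̂ ε`. -/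
theorem dual_laplacian_mp_formula {n : ℕ} (hn : 0 < n)
    (G : SimpleGraph (Fin n)) [DecidableRel G.Adj] (hG : G.Connected)
    (Lhat : Matrix (Fin n) (Fin n) ℝ) (hsym : Lhatᵀ = Lhat)
    (hrow : Lhat *ᵥ (fun _ => (1 : ℝ)) = 0)
    (hcol : (fun _ => (1 : ℝ)) ᵥ* Lhat = 0)
    (Ld : Matrix (Fin n) (Fin n) ℝ)
    (h1 : G.lapMatrix ℝ * Ld * G.lapMatrix ℝ = G.lapMatrix ℝ)
    (h2 : Ld * G.lapMatrix ℝ * Ld = Ld)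
    (h3 : (G.lapMatrix ℝ * Ld)ᵀ = G.lapMatrix ℝ * Ld)
    (h4 : (Ld * G.lapMatrix ℝ)ᵀ = Ld * G.lapMatrix ℝ) :
    dm (G.lapMatrix ℝ) Lhat * dm Ld (-(Ld * Lhat * Ld)) * dm (G.lapMatrix ℝ) Lhat
        = dm (G.lapMatrix ℝ) Lhat ∧
      dm Ld (-(Ld * Lhat * Ld)) * dm (G.lapMatrix ℝ) Lhat * dm Ld (-(Ld * Lhat * Ld))
        = dm Ld (-(Ld * Lhat * Ld)) ∧
      (dm (G.lapMatrix ℝ) Lhat * dm Ld (-(Ld * Lhat * Ld)))ᵀ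
        = dm (G.lapMatrix ℝ) Lhat * dm Ld (-(Ld * Lhat * Ld)) ∧
      (dm Ld (-(Ld * Lhat * Ld)) * dm (G.lapMatrix ℝ) Lhat)ᵀ
        = dm Ld (-(Ld * Lhat * Ld)) * dm (G.lapMatrix ℝ) Lhat := by
  set L := G.lapMatrix ℝ with hL
  have Lsym : Lᵀ = L := G.isSymm_lapMatrix (R := ℝ)
  -- key projection facts
  have hPs : (1 - L * Ld)ᵀ = 1 - L * Ld := by
    rw [Matrix.transpose_sub, Matrix.transpose_one, h3]
  have hPL : (1 - L * Ld) * L = 0 := by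
    rw [Matrix.sub_mul, Matrix.one_mul, h1, sub_self]
  have hLP : L * (1 - L * Ld) = 0 := by
    have := congrArg Matrix.transpose hPL
    rwa [Matrix.transpose_mul, hPs, Matrix.transpose_zero, Lsym] at this
  have k1 : L * Ld * Lhat = Lhat := by
    have hk := aux_const hn G hG Lhat _ hcol hLP hPs
    rw [Matrix.sub_mul, Matrix.one_mul, sub_eq_zero] at hk
    exact hk.symm
  have hQs : (1 - Ld * L)ᵀ = 1 - Ld * L := by
    rw [Matrix.transpose_sub, Matrix.transpose_one, h4]
  have hLQ : L * (1 - Ld * L) = 0 := by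
    rw [Matrix.mul_sub, Matrix.mul_one, ← Matrix.mul_assoc, h1, sub_self]
  have k2 : Lhat * Ld * L = Lhat := by
    have hk := aux_const hn G hG Lhat _ hcol hLQ hQs
    have := congrArg Matrix.transpose hk
    rw [Matrix.transpose_mul, hQs, hsym, Matrix.transpose_zero] at this
    rw [Matrix.mul_sub, Matrix.mul_one, sub_eq_zero] at this
    rw [Matrix.mul_assoc]
    exact this.symm
  have k2' : Lhat * (Ld * L) = Lhat := by rw [← Matrix.mul_assoc]; exact k2
  -- derived products
  have e5 : L * -(Ld * Lhat * Ld) = -(Lhat * Ld) := by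
    rw [Matrix.mul_neg, ← Matrix.mul_assoc, ← Matrix.mul_assoc, k1]
  have e6 : -(Ld * Lhat * Ld) * L = -(Ld * Lhat) := by
    rw [Matrix.neg_mul, Matrix.mul_assoc, Matrix.mul_assoc, k2']
  have e7 : Ld * L * -(Ld * Lhat * Ld) = -(Ld * Lhat * Ld) := by
    rw [Matrix.mul_neg, ← Matrix.mul_assoc, ← Matrix.mul_assoc, h2]
  refine ⟨?_, ?_, ?_, ?_⟩
  · rw [dm_mul, dm_mul]
    refine dm_congr h1 ?_
    rw [k1, e5, Matrix.add_mul, Matrix.neg_mul, k2]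
    abel
  · rw [dm_mul, dm_mul]
    refine dm_congr h2 ?_
    rw [e7, e6, Matrix.add_mul, Matrix.neg_mul]
    rw [Matrix.mul_assoc Ld Lhat Ld]
    abel
  · rw [dm_mul]
    have hz : L * -(Ld * Lhat * Ld) + Lhat * Ld = 0 := by rw [e5]; abel
    rw [hz, dm_transpose, h3, Matrix.transpose_zero]
  · rw [dm_mul]
    have hz : Ld * Lhat + -(Ld * Lhat * Ld) * L = 0 := by rw [e6]; abel
    rw [hz, dm_transpose, h4, Matrix.transpose_zero]
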